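/- Let H be a D-family of subspaces of a Banach space X, and let (Y_n) be a decreasing sequence of elements of H. Then there exists Y_∞ ∈ H such that for every n, Y_∞ is almost contained in Y_n (i.e. some finite-codimensional subspace of Y_∞ is contained in Y_n). -/

import Mathlib

/-- The set of closed linear subspaces of a normed space. -/
def ClosedSub (E : Type) [NormedAddCommGroup E] [NormedSpace ℝ E] :=
  {Y : Submodule ℝ E // IsClosed (Y : Set E)}

/-- The basic set `[F, Y]_ε` of the Ellentuck topology: the set of closed subspaces `Z`
for which there exist a closed subspace `Z'` with `F ⊆ Z' ⊆ Y` and an isomorphism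
`T : Z' → Z` with `‖T - Id_{Z'}‖ < ε`. -/
def ellSet (E : Type) [NormedAddCommGroup E] [NormedSpace ℝ E]
    (F Y : Submodule ℝ E) (ε : ℝ) : Set (ClosedSub E) :=
  {Z | ∃ Z' : Submodule ℝ E, IsClosed (Z' : Set E) ∧ F ≤ Z' ∧ Z' ≤ Y ∧
    ∃ T : ↥Z' ≃L[ℝ] ↥Z.1,
      ‖Z.1.subtypeL.comp (T : ↥Z' →L[ℝ] ↥Z.1) - Z'.subtypeL‖ < ε}

/-- The collection of all basic sets `[F, Y]_ε` with `F` finite-dimensional,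
`Y` closed with `F ⊆ Y`, and `ε > 0`. -/
def ellBasis (E : Type) [NormedAddCommGroup E] [NormedSpace ℝ E] :
    Set (Set (ClosedSub E)) :=
  {S | ∃ (F Y : Submodule ℝ E) (ε : ℝ), FiniteDimensional ℝ F ∧ IsClosed (Y : Set E) ∧
    F ≤ Y ∧ 0 < ε ∧ S = ellSet E F Y ε}

/-- The Ellentuck topology on `Sub(E)`, generated by the sets `[F, Y]_ε`. -/
def ellTop (E : Type) [NormedAddCommGroup E] [NormedSpace ℝ E] :
    TopologicalSpace (ClosedSub E) :=
  TopologicalSpace.generateFrom (ellBasis E)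


/-- A D-family of subspaces of `E`: a family of infinite-dimensional closed subspaces
which is stable under finite-dimensional modifications and `G_δ` for the Ellentuck
topology. -/
def DFamily (E : Type) [NormedAddCommGroup E] [NormedSpace ℝ E]
    (H : Set (ClosedSub E)) : Prop :=
  (∀ Y ∈ H, ¬ FiniteDimensional ℝ Y.1) ∧
  (∀ Y Z : ClosedSub E,
    (∃ F : Submodule ℝ E, FiniteDimensional ℝ F ∧ Z.1 = Y.1 ⊔ F) → (Y ∈ H ↔ Z ∈ H)) ∧
  @IsGδ _ (ellTop E) H

/-- `V ⊆* W`: some finite-codimensional subspace of `V` is contained in `W`. -/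
def AlmostContained {E : Type} [NormedAddCommGroup E] [NormedSpace ℝ E]
    (V W : Submodule ℝ E) : Prop :=
  ∃ Z : Submodule ℝ ↥V, FiniteDimensional ℝ (↥V ⧸ Z) ∧ Z.map V.subtype ≤ W


variable {E : Type} [NormedAddCommGroup E] [NormedSpace ℝ E]

/-- A closed subspace plus a finite-dimensional subspace is closed. -/
lemma mylem_isClosed_sup [CompleteSpace E] (Y F : Submodule ℝ E)
    (hY : IsClosed (Y : Set E)) (hF : FiniteDimensional ℝ F) :
    IsClosed ((Y ⊔ F : Submodule ℝ E) : Set E) := by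
  haveI : IsClosed (Y : Set E) := hY
  haveI := hF
  have hcont : Continuous Y.mkQ := Y.isOpenQuotientMap_mkQ.continuous
  have hfd : FiniteDimensional ℝ (F.map Y.mkQ) := inferInstance
  have hcl : IsClosed ((F.map Y.mkQ : Submodule ℝ (E ⧸ Y)) : Set (E ⧸ Y)) :=
    Submodule.closed_of_finiteDimensional _
  have heq : (Y ⊔ F : Submodule ℝ E) = (F.map Y.mkQ).comap Y.mkQ := by
    rw [Submodule.comap_map_eq, Submodule.ker_mkQ, sup_comm]
  rw [heq]
  exact hcl.preimage hcont

lemma mylem_almostContained (V W F : Submodule ℝ E) (hF : FiniteDimensional ℝ F)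
    (h : V ≤ W ⊔ F) :
    ∃ Z : Submodule ℝ ↥V, FiniteDimensional ℝ (↥V ⧸ Z) ∧ Z.map V.subtype ≤ W := by
  haveI := hF
  set φ : ↥V →ₗ[ℝ] E ⧸ W := W.mkQ.comp V.subtype with hφ
  refine ⟨W.comap V.subtype, ?_, ?_⟩
  · have hker : LinearMap.ker φ = W.comap V.subtype := by
      rw [hφ, LinearMap.ker_comp, Submodule.ker_mkQ]
    have hrange : LinearMap.range φ ≤ F.map W.mkQ := by
      rw [hφ, LinearMap.range_comp, Submodule.range_subtype]
      intro x hx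
      obtain ⟨v, hv, rfl⟩ := hx
      have := h hv
      rw [sup_comm] at this
      obtain ⟨f, hf, w, hw, rfl⟩ := Submodule.mem_sup.mp this
      refine ⟨f, hf, ?_⟩
      show W.mkQ f = W.mkQ (f + w)
      rw [Submodule.mkQ_apply, Submodule.mkQ_apply, Submodule.Quotient.eq]
      simpa using W.neg_mem hw
    haveI : FiniteDimensional ℝ (F.map W.mkQ) := inferInstance
    haveI : FiniteDimensional ℝ (LinearMap.range φ) :=
      Submodule.finiteDimensional_of_le hrange
    have e := φ.quotKerEquivRange
    rw [hker] at e
    exact e.symm.finiteDimensional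
  · exact (Submodule.map_comap_le _ _)

set_option maxHeartbeats 1000000 in
set_option synthInstance.maxHeartbeats 200000 in
lemma mylem_key (E : Type) [NormedAddCommGroup E] [NormedSpace ℝ E]
    (O : Set (ClosedSub E)) (hO : TopologicalSpace.GenerateOpen (ellBasis E) O) :
    ∀ Z₀ ∈ O, ∃ G : Submodule ℝ E, FiniteDimensional ℝ G ∧ G ≤ Z₀.1 ∧
      ∀ (W : Submodule ℝ E) (hW : IsClosed (W : Set E)), G ≤ W → W ≤ Z₀.1 →
        (⟨W, hW⟩ : ClosedSub E) ∈ O := by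
  induction hO with
  | basic s hs =>
    obtain ⟨F, Yb, ε, hFfd, hYc, hFY, hε, rfl⟩ := hs
    rintro Z₀ ⟨Z', hZ'c, hFZ', hZ'Y, T, hT⟩
    haveI := hFfd
    set A : ↥Z' →L[ℝ] E := Z₀.1.subtypeL.comp (T : ↥Z' →L[ℝ] ↥Z₀.1) with hA
    have hAval : ∀ z : ↥Z', A z = (T z : E) := fun z => rfl
    refine ⟨Submodule.map (A : ↥Z' →ₗ[ℝ] E) (F.comap Z'.subtype), ?_, ?_, ?_⟩
    · haveI : FiniteDimensional ℝ (F.comap Z'.subtype) :=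
        (Submodule.comapSubtypeEquivOfLe hFZ').symm.finiteDimensional
      have heq : Submodule.map (A : ↥Z' →ₗ[ℝ] E) (F.comap Z'.subtype)
          = Submodule.map (A : ↥Z' →ₗ[ℝ] E) (F.comap Z'.subtype) := rfl
      rw [heq]
      exact Module.Finite.map _ _
    · rintro x ⟨y, hy, rfl⟩
      change A y ∈ (Z₀.1 : Set E)
      rw [hAval]
      exact (T y).2
    · intro W hWc hGW hWZ
      set U : Submodule ℝ ↥Z' := Submodule.comap (A : ↥Z' →ₗ[ℝ] E) W with hU
      set Z'' : Submodule ℝ E := U.map Z'.subtype with hZ''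
      have hZ''Z' : Z'' ≤ Z' := Submodule.map_subtype_le _ _
      have hZ''c : IsClosed (Z'' : Set E) := by
        have h1 : IsClosed (U : Set ↥Z') := hWc.preimage A.continuous
        have h2 : (Z'' : Set E) = (Subtype.val : ↥Z' → E) '' (U : Set ↥Z') := by
          rw [hZ'', Submodule.map_coe]; rfl
        rw [h2]
        exact hZ'c.isClosedEmbedding_subtypeVal.isClosedMap _ h1
      have hFZ'' : F ≤ Z'' := by
        intro x hx
        refine ⟨⟨x, hFZ' hx⟩, ?_, rfl⟩
        show A ⟨x, hFZ' hx⟩ ∈ W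
        exact hGW ⟨⟨x, hFZ' hx⟩, hx, rfl⟩
      -- forward map
      have hjc : Continuous (Submodule.inclusion hZ''Z') :=
        Continuous.subtype_mk continuous_subtype_val _
      set j : ↥Z'' →L[ℝ] ↥Z' := ⟨Submodule.inclusion hZ''Z', hjc⟩ with hj
      have hjU : ∀ x : ↥Z'', j x ∈ U := by
        rintro ⟨x, u, hu, hux⟩
        have : j ⟨x, ⟨u, hu, hux⟩⟩ = u := by
          apply Subtype.ext; exact hux.symm
        rw [this]; exact hu
      have hφ0 : ∀ x : ↥Z'', (A.comp j) x ∈ W := fun x => hjU x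
      set φ : ↥Z'' →L[ℝ] ↥W := (A.comp j).codRestrict W hφ0 with hφ
      -- backward map
      have hiWc : Continuous (Submodule.inclusion hWZ) :=
        Continuous.subtype_mk continuous_subtype_val _
      set iW : ↥W →L[ℝ] ↥Z₀.1 := ⟨Submodule.inclusion hWZ, hiWc⟩ with hiW
      set ψ0 : ↥W →L[ℝ] E :=
        Z'.subtypeL.comp ((T.symm : ↥Z₀.1 →L[ℝ] ↥Z').comp iW) with hψ0
      have hψ0mem : ∀ w : ↥W, ψ0 w ∈ Z'' := by
        intro w
        refine ⟨T.symm (iW w), ?_, rfl⟩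
        show A (T.symm (iW w)) ∈ W
        rw [hAval, T.apply_symm_apply]
        exact w.2
      set ψ : ↥W →L[ℝ] ↥Z'' := ψ0.codRestrict Z'' hψ0mem with hψ
      have hval_φ : ∀ x : ↥Z'', (φ x : E) = (T (j x) : E) := fun x => rfl
      have hval_ψ : ∀ w : ↥W, (ψ w : E) = (T.symm (iW w) : E) := fun w => rfl
      have hg : Function.LeftInverse ψ φ := by
        intro x
        apply Subtype.ext
        have h2 : (↑(ψ (φ x)) : E) = ((T.symm (iW (φ x))) : E) := rfl
        have h1 : iW (φ x) = T (j x) := Subtype.ext rfl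
        rw [h2, h1, T.symm_apply_apply]
        rfl
      have hg2 : Function.RightInverse ψ φ := by
        intro w
        apply Subtype.ext
        have h2 : (↑(φ (ψ w)) : E) = ((T (j (ψ w))) : E) := rfl
        have h1 : j (ψ w) = T.symm (iW w) := Subtype.ext rfl
        rw [h2, h1, T.apply_symm_apply]
        rfl
      set S : ↥Z'' ≃L[ℝ] ↥W := ContinuousLinearEquiv.equivOfInverse φ ψ hg hg2 with hS
      refine ⟨Z'', hZ''c, hFZ'', hZ''Z'.trans hZ'Y, S, ?_⟩
      refine lt_of_le_of_lt
        (ContinuousLinearMap.opNorm_le_bound _ (norm_nonneg (A - Z'.subtypeL)) fun x => ?_) hT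
      have h1 : (W.subtypeL.comp (S : ↥Z'' →L[ℝ] ↥W) - Z''.subtypeL) x
          = (Z₀.1.subtypeL.comp (T : ↥Z' →L[ℝ] ↥Z₀.1) - Z'.subtypeL) (j x) := rfl
      have h2 : ‖j x‖ = ‖x‖ := rfl
      rw [h1]
      exact (ContinuousLinearMap.le_opNorm _ _).trans (le_of_eq (by rw [h2]))
  | univ =>
    intro Z₀ _
    exact ⟨⊥, inferInstance, bot_le, fun W hW _ _ => trivial⟩
  | inter s t hs ht ihs iht =>
    intro Z₀ hZ
    obtain ⟨G₁, hG₁fd, hG₁le, hG₁⟩ := ihs Z₀ hZ.1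
    obtain ⟨G₂, hG₂fd, hG₂le, hG₂⟩ := iht Z₀ hZ.2
    haveI := hG₁fd; haveI := hG₂fd
    refine ⟨G₁ ⊔ G₂, inferInstance, sup_le hG₁le hG₂le, fun W hW hGW hWZ => ?_⟩
    exact ⟨hG₁ W hW (le_sup_left.trans hGW) hWZ, hG₂ W hW (le_sup_right.trans hGW) hWZ⟩
  | sUnion S hS ih =>
    rintro Z₀ ⟨s, hsS, hZs⟩
    obtain ⟨G, hGfd, hGle, hG⟩ := ih s hsS Z₀ hZs
    exact ⟨G, hGfd, hGle, fun W hW hGW hWZ => ⟨s, hsS, hG W hW hGW hWZ⟩⟩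


/-- diagonalization in D-families: every decreasing sequence of members of a
D-family `H` admits a member of `H` almost contained in all of them. -/
theorem statement5 (E : Type) [NormedAddCommGroup E] [NormedSpace ℝ E] [CompleteSpace E]
    (H : Set (ClosedSub E)) (hH : DFamily E H)
    (Y : ℕ → ClosedSub E) (hYH : ∀ n, Y n ∈ H)
    (hdec : ∀ n, (Y (n + 1)).1 ≤ (Y n).1) :
    ∃ Z ∈ H, ∀ n, AlmostContained Z.1 (Y n).1 := by
  obtain ⟨h1, h2, h3⟩ := hH
  obtain ⟨T, hTopen, hTct, hTeq⟩ := h3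
  rcases T.eq_empty_or_nonempty with rfl | hTne
  · exfalso
    have hbotc : IsClosed ((⊥ : Submodule ℝ E) : Set E) := by
      rw [Submodule.bot_coe]; exact isClosed_singleton
    have hbot : (⟨⊥, hbotc⟩ : ClosedSub E) ∈ H := by rw [hTeq]; simp; exact trivial
    exact h1 _ hbot inferInstance
  obtain ⟨f, rfl⟩ := hTct.exists_eq_range hTne
  have hfopen : ∀ n, TopologicalSpace.GenerateOpen (ellBasis E) (f n) :=
    fun n => hTopen (f n) ⟨n, rfl⟩
  have hHf : ∀ n, H ⊆ f n := by
    intro n Z hZ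
    rw [hTeq] at hZ
    exact hZ (f n) ⟨n, rfl⟩
  -- the inductive step
  have hstep : ∀ (p : {c : Submodule ℝ E // FiniteDimensional ℝ c}) (k : ℕ),
      ∃ c' : {c : Submodule ℝ E // FiniteDimensional ℝ c}, p.1 ≤ c'.1 ∧
        c'.1 ≤ (Y k).1 ⊔ p.1 ∧
        ∀ (W : Submodule ℝ E) (hW : IsClosed (W : Set E)), c'.1 ≤ W →
          W ≤ (Y k).1 ⊔ p.1 → (⟨W, hW⟩ : ClosedSub E) ∈ f k := by
    rintro ⟨c, hc⟩ k
    have hMc : IsClosed (((Y k).1 ⊔ c : Submodule ℝ E) : Set E) :=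
      mylem_isClosed_sup _ _ (Y k).2 hc
    have hMH : (⟨(Y k).1 ⊔ c, hMc⟩ : ClosedSub E) ∈ H :=
      (h2 (Y k) ⟨(Y k).1 ⊔ c, hMc⟩ ⟨c, hc, rfl⟩).mp (hYH k)
    obtain ⟨G, hGfd, hGle, hG⟩ :=
      mylem_key E (f k) (hfopen k) ⟨(Y k).1 ⊔ c, hMc⟩ (hHf k hMH)
    haveI := hGfd; haveI := hc
    refine ⟨⟨G ⊔ c, inferInstance⟩, le_sup_right, sup_le hGle le_sup_right, ?_⟩
    intro W hW hcW hWM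
    exact hG W hW (le_sup_left.trans hcW) hWM
  choose nxt hmono hle hprop using hstep
  set c : ℕ → {c : Submodule ℝ E // FiniteDimensional ℝ c} :=
    fun k => Nat.rec ⟨⊥, inferInstance⟩ (fun k ih => nxt ih k) k with hc
  have hcsucc : ∀ k, c (k + 1) = nxt (c k) k := fun k => rfl
  have hcmono : Monotone (fun k => (c k).1) := by
    apply monotone_nat_of_le_succ
    intro k
    rw [hcsucc k]
    exact hmono (c k) k
  have hYanti : Antitone fun n => (Y n).1 := antitone_nat_of_succ_le hdec
  have hclaim : ∀ k j, (c j).1 ≤ (Y k).1 ⊔ (c k).1 := by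
    intro k j
    induction j with
    | zero => exact bot_le
    | succ j ih =>
      rcases le_or_gt (j + 1) k with h | h
      · exact (hcmono h).trans le_sup_right
      · have hkj : k ≤ j := Nat.lt_succ_iff.mp h
        have hYle : (Y j).1 ≤ (Y k).1 := hYanti hkj
        rw [hcsucc j]
        refine (hle (c j) j).trans (sup_le (hYle.trans le_sup_left) ih)
  set Winf : Submodule ℝ E := (⨆ j, (c j).1).topologicalClosure with hWinf
  have hWinfc : IsClosed (Winf : Set E) := Submodule.isClosed_topologicalClosure _
  have hWinfle : ∀ k, Winf ≤ (Y k).1 ⊔ (c k).1 := by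
    intro k
    refine Submodule.topologicalClosure_minimal _ (iSup_le (hclaim k))
      (mylem_isClosed_sup _ _ (Y k).2 (c k).2)
  have hWinfge : ∀ k, (c (k + 1)).1 ≤ Winf :=
    fun k => (le_iSup (fun j => (c j).1) (k + 1)).trans
      (Submodule.le_topologicalClosure _)
  have hmem : ∀ k, (⟨Winf, hWinfc⟩ : ClosedSub E) ∈ f k := by
    intro k
    have := hprop (c k) k Winf hWinfc (by rw [← hcsucc k]; exact hWinfge k) (hWinfle k)
    exact this
  refine ⟨⟨Winf, hWinfc⟩, ?_, ?_⟩
  · rw [hTeq]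
    rintro s ⟨n, rfl⟩
    exact hmem n
  · intro n
    exact mylem_almostContained Winf (Y n).1 (c n).1 (c n).2 (hWinfle n)
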